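/- arXiv:1003.3382 — 2 statements merged into one kernel-verified Lean document; each statement's English description precedes it below -/
import Mathlib

section
/- Let A be a Banach algebra and a' ∈ A*. Then a' ∈ wap(A) if and only if the adjoint of the operator T_{a'} : A → A*, T_{a'}(a) = a'a, is weak*-to-weak continuous from A** to A*. Consequently, A is Arens regular if and only if the adjoint of T_{a'} is weak*-to-weak continuous for every a' ∈ A*. -/
open Filter Topology

/-- `arensHalf m y''` is the map `z' ↦ m**(y'', z')`, where
`⟨m*(z', x), y⟩ = ⟨z', m(x,y)⟩` and `⟨m**(y'', z'), x⟩ = ⟨y'', m*(z', x)⟩`. -/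
noncomputable def arensHalf {X Y Z : Type*} [NormedAddCommGroup X] [NormedSpace ℝ X]
    [NormedAddCommGroup Y] [NormedSpace ℝ Y] [NormedAddCommGroup Z] [NormedSpace ℝ Z]
    (m : X →L[ℝ] Y →L[ℝ] Z) (y'' : (Y →L[ℝ] ℝ) →L[ℝ] ℝ) :
    (Z →L[ℝ] ℝ) →L[ℝ] (X →L[ℝ] ℝ) :=
  (ContinuousLinearMap.compL ℝ X (Y →L[ℝ] ℝ) ℝ y'').comp
    (((ContinuousLinearMap.compL ℝ X (Y →L[ℝ] Z) (Y →L[ℝ] ℝ)).flip m).comp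
      (ContinuousLinearMap.compL ℝ Y Z ℝ))

/-- The first Arens extension `m*** : X** × Y** → Z**` of a bounded bilinear map `m`,
defined by `⟨m***(x'', y''), z'⟩ = ⟨x'', m**(y'', z')⟩`. -/
noncomputable def arens {X Y Z : Type*} [NormedAddCommGroup X] [NormedSpace ℝ X]
    [NormedAddCommGroup Y] [NormedSpace ℝ Y] [NormedAddCommGroup Z] [NormedSpace ℝ Z]
    (m : X →L[ℝ] Y →L[ℝ] Z) (x'' : (X →L[ℝ] ℝ) →L[ℝ] ℝ) (y'' : (Y →L[ℝ] ℝ) →L[ℝ] ℝ) :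
    (Z →L[ℝ] ℝ) →L[ℝ] ℝ :=
  x''.comp (arensHalf m y'')

/-- Canonical embedding of a normed space into its double dual. -/
noncomputable def incl {X : Type*} [NormedAddCommGroup X] [NormedSpace ℝ X] (x : X) :
    (X →L[ℝ] ℝ) →L[ℝ] ℝ :=
  ContinuousLinearMap.apply ℝ ℝ x

/-- `f : E** → F**` is weak*-to-weak* continuous. -/
def WWCont {E F : Type*} [NormedAddCommGroup E] [NormedSpace ℝ E]
    [NormedAddCommGroup F] [NormedSpace ℝ F]
    (f : ((E →L[ℝ] ℝ) →L[ℝ] ℝ) → ((F →L[ℝ] ℝ) →L[ℝ] ℝ)) : Prop :=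
  ∀ (l : Filter ((E →L[ℝ] ℝ) →L[ℝ] ℝ)) (u : (E →L[ℝ] ℝ) →L[ℝ] ℝ),
    (∀ φ : E →L[ℝ] ℝ, Filter.Tendsto (fun v => v φ) l (nhds (u φ))) →
    ∀ ψ : F →L[ℝ] ℝ, Filter.Tendsto (fun v => f v ψ) l (nhds (f u ψ))

/-- Helly-type lemma: a double-dual element agrees with some point evaluation on
any finite set of functionals. -/
lemma helly {X : Type*} [NormedAddCommGroup X] [NormedSpace ℝ X]
    (b'' : (X →L[ℝ] ℝ) →L[ℝ] ℝ) (G : Finset (X →L[ℝ] ℝ)) :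
    ∃ b : X, ∀ g ∈ G, g b = b'' g := by
  classical
  set E := EuclideanSpace ℝ {g // g ∈ G}
  let e := (WithLp.equiv 2 ({g // g ∈ G} → ℝ)).symm
  let Φ : X →ₗ[ℝ] E :=
    { toFun := fun b => e (fun g => g.1 b)
      map_add' := by
        intro x y
        show e _ = e _ + e _
        simp only [e, WithLp.equiv_symm_apply, ← WithLp.toLp_add]
        congr 1; funext g; simp
      map_smul' := by
        intro c x
        show e _ = c • e _
        simp only [e, WithLp.equiv_symm_apply, ← WithLp.toLp_smul]
        congr 1; funext g; simp }
  set V : Submodule ℝ E := LinearMap.range Φ with hV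
  have hx : e (fun g => b'' g.1) ∈ Vᗮᗮ := by
    rw [Submodule.mem_orthogonal]
    intro c hc
    have hker : ∀ b : X, (∑ g : {g // g ∈ G}, c g • (g.1 : X →L[ℝ] ℝ)) b = 0 := by
      intro b
      have := (Submodule.mem_orthogonal V c).mp hc (Φ b) ⟨b, rfl⟩
      simpa [E, e, PiLp.inner_apply, RCLike.inner_apply, Φ,
        WithLp.equiv_symm_apply, PiLp.toLp_apply, mul_comm,
        ContinuousLinearMap.sum_apply, ContinuousLinearMap.smul_apply,
        smul_eq_mul] using this
    have h0 : (∑ g : {g // g ∈ G}, c g • (g.1 : X →L[ℝ] ℝ)) = 0 :=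
      ContinuousLinearMap.ext fun b => by simpa using hker b
    have := congrArg b'' h0
    simpa [map_sum, PiLp.inner_apply, RCLike.inner_apply, smul_eq_mul,
      e, WithLp.equiv_symm_apply, PiLp.toLp_apply, mul_comm] using this
  rw [Submodule.orthogonal_orthogonal] at hx
  obtain ⟨b, hb⟩ := hx
  refine ⟨b, fun g hg => ?_⟩
  have := congrArg (fun z : E => z ⟨g, hg⟩) hb
  simpa [Φ, e, WithLp.equiv_symm_apply, PiLp.toLp_apply] using this

/-- `a' ∈ wap(A)` iff the adjoint of `T_{a'} : A → A*`, `T_{a'}a = a'a`,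
is weak*-to-weak continuous; consequently `A` is Arens regular iff this holds for
every `a' ∈ A*`. -/
theorem mem_wap_iff_adjoint_wstar_weak_continuous {A : Type*}
    [NonUnitalNormedRing A] [NormedSpace ℝ A] [IsScalarTower ℝ A A] [SMulCommClass ℝ A A]
    [CompleteSpace A] :
    (∀ a' : A →L[ℝ] ℝ,
      ((∀ (a'' b'' : (A →L[ℝ] ℝ) →L[ℝ] ℝ),
          arens (ContinuousLinearMap.mul ℝ A) a'' b'' a' =
            arens (ContinuousLinearMap.mul ℝ A).flip b'' a'' a') ↔
        (∀ (l : Filter ((A →L[ℝ] ℝ) →L[ℝ] ℝ)) (u : (A →L[ℝ] ℝ) →L[ℝ] ℝ),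
          (∀ g : A →L[ℝ] ℝ, Filter.Tendsto (fun v => v g) l (nhds (u g))) →
          ∀ F : (A →L[ℝ] ℝ) →L[ℝ] ℝ,
            Filter.Tendsto
              (fun v : (A →L[ℝ] ℝ) →L[ℝ] ℝ =>
                F (v.comp ((ContinuousLinearMap.compL ℝ A A ℝ a').comp
                  (ContinuousLinearMap.mul ℝ A))))
              l (nhds (F (u.comp ((ContinuousLinearMap.compL ℝ A A ℝ a').comp
                  (ContinuousLinearMap.mul ℝ A)))))))) ∧
    ((∀ a'' b'' : (A →L[ℝ] ℝ) →L[ℝ] ℝ,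
        arens (ContinuousLinearMap.mul ℝ A) a'' b'' =
          arens (ContinuousLinearMap.mul ℝ A).flip b'' a'') ↔
      (∀ a' : A →L[ℝ] ℝ,
        ∀ (l : Filter ((A →L[ℝ] ℝ) →L[ℝ] ℝ)) (u : (A →L[ℝ] ℝ) →L[ℝ] ℝ),
          (∀ g : A →L[ℝ] ℝ, Filter.Tendsto (fun v => v g) l (nhds (u g))) →
          ∀ F : (A →L[ℝ] ℝ) →L[ℝ] ℝ,
            Filter.Tendsto
              (fun v : (A →L[ℝ] ℝ) →L[ℝ] ℝ =>
                F (v.comp ((ContinuousLinearMap.compL ℝ A A ℝ a').comp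
                  (ContinuousLinearMap.mul ℝ A))))
              l (nhds (F (u.comp ((ContinuousLinearMap.compL ℝ A A ℝ a').comp
                  (ContinuousLinearMap.mul ℝ A))))))) := by
  classical
  have main : ∀ a' : A →L[ℝ] ℝ,
      ((∀ (a'' b'' : (A →L[ℝ] ℝ) →L[ℝ] ℝ),
          arens (ContinuousLinearMap.mul ℝ A) a'' b'' a' =
            arens (ContinuousLinearMap.mul ℝ A).flip b'' a'' a') ↔
        (∀ (l : Filter ((A →L[ℝ] ℝ) →L[ℝ] ℝ)) (u : (A →L[ℝ] ℝ) →L[ℝ] ℝ),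
          (∀ g : A →L[ℝ] ℝ, Filter.Tendsto (fun v => v g) l (nhds (u g))) →
          ∀ F : (A →L[ℝ] ℝ) →L[ℝ] ℝ,
            Filter.Tendsto
              (fun v : (A →L[ℝ] ℝ) →L[ℝ] ℝ =>
                F (v.comp ((ContinuousLinearMap.compL ℝ A A ℝ a').comp
                  (ContinuousLinearMap.mul ℝ A))))
              l (nhds (F (u.comp ((ContinuousLinearMap.compL ℝ A A ℝ a').comp
                  (ContinuousLinearMap.mul ℝ A))))))) := by
    intro a'
    set T : A →L[ℝ] (A →L[ℝ] ℝ) :=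
      (ContinuousLinearMap.compL ℝ A A ℝ a').comp (ContinuousLinearMap.mul ℝ A) with hT
    set S : A →L[ℝ] (A →L[ℝ] ℝ) :=
      (ContinuousLinearMap.compL ℝ A A ℝ a').comp (ContinuousLinearMap.mul ℝ A).flip with hS
    constructor
    · intro H l u hconv F
      have key : ∀ v : (A →L[ℝ] ℝ) →L[ℝ] ℝ, F (v.comp T) = v (F.comp S) := fun v => H F v
      simp only [key]
      exact hconv (F.comp S)
    · intro C a'' b''
      choose β hβ using fun G => helly b'' G
      set l : Filter ((A →L[ℝ] ℝ) →L[ℝ] ℝ) :=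
        Filter.map (fun G => incl (β G)) Filter.atTop with hl
      have hconv : ∀ g : A →L[ℝ] ℝ, Filter.Tendsto (fun v => v g) l (nhds (b'' g)) := by
        intro g
        rw [hl, Filter.tendsto_map'_iff]
        refine Filter.Tendsto.congr' ?_ tendsto_const_nhds
        filter_upwards [Filter.eventually_ge_atTop ({g} : Finset (A →L[ℝ] ℝ))] with G hG
        exact (hβ G g (hG (Finset.mem_singleton_self g))).symm
      have h1 := C l b'' hconv a''
      have h2 : Filter.Tendsto (fun v : (A →L[ℝ] ℝ) →L[ℝ] ℝ => v (a''.comp S)) l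
          (nhds (a'' (b''.comp T))) := by
        rw [hl, Filter.tendsto_map'_iff] at h1 ⊢
        exact h1
      have h3 := hconv (a''.comp S)
      have : l.NeBot := by
        rw [hl]; exact Filter.map_neBot
      exact tendsto_nhds_unique h2 h3
  refine ⟨main, ?_, ?_⟩
  · intro H a'
    exact (main a').mp (fun a'' b'' => DFunLike.congr_fun (H a'' b'') a')
  · intro C a'' b''
    exact ContinuousLinearMap.ext fun a' => (main a').mpr (C a') a'' b''
end

section
/- Let B be a Banach A-bimodule such that for all bounded nets (b_α) ⊆ B and (b'_β) ⊆ B*, the iterated limits lim_α lim_β ⟨b'_β, b_α⟩ and lim_β lim_α ⟨b'_β, b_α⟩ agree whenever both exist. Then A has both the Lw*w-property and the Rw*w-property with respect to B. -/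
open Filter Topology

section Aux

variable {X : Type*} [NormedAddCommGroup X] [NormedSpace ℝ X]

@[simp] lemma incl_apply (x : X) (φ : X →L[ℝ] ℝ) : incl x φ = φ x := rfl

lemma incl_isometry : Isometry (incl : X → (X →L[ℝ] ℝ) →L[ℝ] ℝ) :=
  (NormedSpace.inclusionInDoubleDualLi ℝ (E := X)).isometry

/-- Goldstine-type finite approximation: an element of the double dual can be approximated,
on finitely many functionals, by an element of the ball of radius `C`. -/
lemma goldstine_approx (F : (X →L[ℝ] ℝ) →L[ℝ] ℝ) {C : ℝ} (hC0 : 0 ≤ C)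
    (hC : ∀ φ' : X →L[ℝ] ℝ, ‖F φ'‖ ≤ C * ‖φ'‖) {ι : Type*} [Fintype ι]
    (φ : ι → (X →L[ℝ] ℝ)) {ε : ℝ} (hε : 0 < ε) :
    ∃ x : X, ‖x‖ ≤ C ∧ ∀ k, |φ k x - F (φ k)| < ε := by
  classical
  rcases eq_or_lt_of_le hC0 with hF | hF
  · have hF0 : ∀ φ' : X →L[ℝ] ℝ, F φ' = 0 := fun φ' => by
      have h1 : ‖F φ'‖ ≤ 0 := by
        have := hC φ'
        rw [← hF] at this
        simpa using this
      exact norm_le_zero_iff.mp h1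
    exact ⟨0, by simpa only [norm_zero] using hC0, fun k => by simp [hF0, hε]⟩
  set T : X →ₗ[ℝ] (ι → ℝ) := LinearMap.pi (fun k => (φ k : X →ₗ[ℝ] ℝ)) with hT
  set s : Set (ι → ℝ) := closure (T '' Metric.closedBall (0 : X) C) with hs
  have hconv : Convex ℝ s := ((convex_closedBall (0 : X) C).linear_image T).closure
  set v : ι → ℝ := fun k => F (φ k) with hv
  have hvs : v ∈ s := by
    by_contra hout
    obtain ⟨f, u, hfu, huv⟩ := geometric_hahn_banach_closed_point hconv isClosed_closure hout
    have hmem : ∀ x : X, ‖x‖ ≤ C → T x ∈ s :=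
      fun x hx => subset_closure ⟨x, by simpa [Metric.mem_closedBall, dist_zero_right] using hx, rfl⟩
    have hu0 : 0 < u := by
      have h0 := hfu (T 0) (hmem 0 (norm_zero (E := X) ▸ hF.le))
      simpa using h0
    set c : ι → ℝ := fun k => f (fun j => if k = j then (1 : ℝ) else 0) with hc
    have key : ∀ y : ι → ℝ, f y = ∑ k, y k * c k := by
      intro y
      conv_lhs => rw [pi_eq_sum_univ y]
      rw [map_sum]
      simp [hc, smul_eq_mul]
    set ψ : X →L[ℝ] ℝ := ∑ k, c k • φ k with hψ
    have hψx : ∀ x : X, ψ x = f (T x) := by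
      intro x
      rw [key (T x)]
      simp [hψ, hT, ContinuousLinearMap.sum_apply, mul_comm]
    have hψF : F ψ = f v := by
      rw [key v]
      simp [hψ, hv, mul_comm]
    have hballψ : ∀ x : X, ‖x‖ ≤ C → ψ x < u := fun x hx => by
      rw [hψx]; exact hfu _ (hmem x hx)
    have habs : ∀ x : X, ‖x‖ ≤ C → |ψ x| ≤ u := by
      intro x hx
      refine abs_le.mpr ⟨?_, (hballψ x hx).le⟩
      have hneg := hballψ (-x) (by simpa using hx)
      rw [map_neg] at hneg
      linarith
    have hnormψ : ‖ψ‖ ≤ u / C := by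
      refine ψ.opNorm_le_bound (by positivity) (fun x => ?_)
      rcases eq_or_ne x 0 with rfl | hx0
      · simp
      · have hx : (0 : ℝ) < ‖x‖ := norm_pos_iff.mpr hx0
        have hsm := habs ((C / ‖x‖) • x) (by
          rw [norm_smul, Real.norm_eq_abs, abs_of_pos (div_pos hF hx),
            div_mul_cancel₀ _ hx.ne'])
        rw [map_smul, smul_eq_mul, abs_mul, abs_of_pos (div_pos hF hx)] at hsm
        have h2 : |ψ x| ≤ u / C * ‖x‖ := by
          rw [div_mul_eq_mul_div, le_div_iff₀ hF]
          calc |ψ x| * C = C / ‖x‖ * |ψ x| * ‖x‖ := by field_simp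
            _ ≤ u * ‖x‖ := mul_le_mul_of_nonneg_right hsm (norm_nonneg x)
        simpa using h2
    have hFψ : F ψ ≤ u := by
      calc F ψ ≤ ‖F ψ‖ := le_abs_self _
        _ ≤ C * ‖ψ‖ := hC ψ
        _ ≤ C * (u / C) := by nlinarith
        _ = u := by field_simp
    rw [hψF] at hFψ
    exact absurd huv (not_lt.mpr hFψ)
  obtain ⟨y, hy, hdist⟩ := Metric.mem_closure_iff.mp hvs ε hε
  obtain ⟨x, hx, rfl⟩ := hy
  refine ⟨x, by simpa [Metric.mem_closedBall, dist_zero_right] using hx, fun k => ?_⟩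
  have := (dist_le_pi_dist v (T x) k).trans_lt hdist
  rw [Real.dist_eq] at this
  calc |φ k x - F (φ k)| = |v k - T x k| := by rw [abs_sub_comm]; rfl
    _ < ε := this

/-- Hahn–Banach separation of a point from a closed convex cone-like set. -/
lemma exists_separating' {Y : Type*} [NormedAddCommGroup Y] [NormedSpace ℝ Y] {s : Set Y}
    (hconv : Convex ℝ s) (hclosed : IsClosed s) (h0 : (0 : Y) ∈ s)
    (hsub : ∀ (c : ℝ), ∀ y ∈ s, c • y ∈ s) {F : Y} (hF : F ∉ s) :
    ∃ Φ : Y →L[ℝ] ℝ, (∀ y ∈ s, Φ y = 0) ∧ 0 < Φ F ∧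
      ∃ D : ℝ, 0 ≤ D ∧ ∀ G, ‖Φ G‖ ≤ D * ‖G‖ := by
  obtain ⟨f, u, hfu, huF⟩ := geometric_hahn_banach_closed_point hconv hclosed hF
  have hu0 : 0 < u := by simpa using hfu 0 h0
  have hzero : ∀ y ∈ s, f y = 0 := by
    intro y hy
    by_contra hc
    have hscale : ∀ t : ℝ, t * f y < u := fun t => by
      have := hfu (t • y) (hsub t y hy)
      rwa [map_smul, smul_eq_mul] at this
    have h1 := hscale ((|u| + 1) / f y)
    rw [div_mul_cancel₀ _ hc] at h1
    have h2 : u ≤ |u| := le_abs_self u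
    linarith
  obtain ⟨D, hD0, hD⟩ := f.bound
  exact ⟨f, hzero, hu0.trans huF, D, hD0.le, hD⟩

end Aux

set_option maxHeartbeats 1000000 in
/-- Grothendieck: if iterated limits over bounded nets agree, every element of the
double dual is an evaluation. -/
lemma surj_of_iterated_limits {B : Type*} [NormedAddCommGroup B] [NormedSpace ℝ B]
    [CompleteSpace B]
    (hiter : ∀ {ι κ : Type} (lι : Filter ι) (lκ : Filter κ), lι.NeBot → lκ.NeBot →
      ∀ (b : ι → B) (b' : κ → (B →L[ℝ] ℝ)),
        (∃ C : ℝ, ∀ i, ‖b i‖ ≤ C) → (∃ C : ℝ, ∀ j, ‖b' j‖ ≤ C) →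
        ∀ (g : ι → ℝ) (h : κ → ℝ) (L₁ L₂ : ℝ),
          (∀ i, Filter.Tendsto (fun j => b' j (b i)) lκ (nhds (g i))) →
          Filter.Tendsto g lι (nhds L₁) →
          (∀ j, Filter.Tendsto (fun i => b' j (b i)) lι (nhds (h j))) →
          Filter.Tendsto h lκ (nhds L₂) → L₁ = L₂)
    (F : (B →L[ℝ] ℝ) →L[ℝ] ℝ) : ∃ x : B, ∀ φ : B →L[ℝ] ℝ, F φ = φ x := by
  classical
  rcases Classical.em (F ∈ Set.range (incl : B → _)) with ⟨x, rfl⟩ | hFr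
  · exact ⟨x, fun φ => rfl⟩
  exfalso
  have hclosed : IsClosed (Set.range (incl : B → _)) :=
    incl_isometry.isClosedEmbedding.isClosed_range
  have hconv : Convex ℝ (Set.range (incl : B → _)) := by
    rintro _ ⟨x, rfl⟩ _ ⟨y, rfl⟩ a b _ _ _
    exact ⟨a • x + b • y, by ext φ; simp⟩
  have h0mem : (0 : (B →L[ℝ] ℝ) →L[ℝ] ℝ) ∈ Set.range (incl : B → _) :=
    ⟨0, by ext φ; simp⟩
  have hsmem : ∀ (c : ℝ), ∀ y ∈ Set.range (incl : B → _),
      c • y ∈ Set.range (incl : B → _) := by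
    rintro c _ ⟨x, rfl⟩
    exact ⟨c • x, by ext φ; simp⟩
  obtain ⟨Φ, hΦ0', hΦF, D, hD0, hD⟩ := exists_separating' hconv hclosed h0mem hsmem hFr
  have hΦ0 : ∀ x : B, Φ (incl x) = 0 := fun x => hΦ0' _ ⟨x, rfl⟩
  set θ := Φ F with hθ
  set α := ℝ × B × (B →L[ℝ] ℝ) with hα
  set P : α → Prop := fun p =>
    0 < p.1 ∧ ‖p.2.1‖ ≤ ‖F‖ ∧ ‖p.2.2‖ ≤ D ∧ |F p.2.2 - θ| < p.1 with hP
  set r : α → α → Prop := fun x y =>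
    y.1 ≤ x.1 / 2 ∧ |y.2.2 (x.2.1)| < y.1 ∧ |x.2.2 (y.2.1) - F x.2.2| < y.1 with hr
  have hstep : ∀ s : Finset α, (∀ x ∈ s, P x) → ∃ y, P y ∧ ∀ x ∈ s, r x y := by
    intro s hs
    obtain ⟨δ, hδ0, hδ⟩ : ∃ δ : ℝ, 0 < δ ∧ ∀ x ∈ s, δ ≤ x.1 := by
      rcases s.eq_empty_or_nonempty with rfl | hne
      · exact ⟨1, one_pos, by simp⟩
      · refine ⟨s.inf' hne (·.1), ?_, fun x hx => Finset.inf'_le _ hx⟩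
        exact (Finset.lt_inf'_iff hne).2 fun x hx => (hs x hx).1
    set ε : ℝ := min δ 1 / 2 with hεdef
    have hε : 0 < ε := by positivity
    -- choose b' approximating Φ on F and the incl of previous b's
    obtain ⟨b', hb'n, hb'⟩ := goldstine_approx Φ hD0 hD
      (fun o : Option {x // x ∈ s} => Option.elim o F (fun x => incl (x : α).2.1)) hε
    -- choose b approximating F on the previous b''s
    obtain ⟨b, hbn, hb⟩ := goldstine_approx F (norm_nonneg F) F.le_opNorm
      (fun x : {x // x ∈ s} => (x : α).2.2) hε
    refine ⟨(ε, b, b'), ⟨hε, hbn, hb'n, by simpa using hb' none⟩, fun x hx => ?_⟩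
    refine ⟨?_, ?_, ?_⟩
    · calc ε ≤ δ / 2 := by
            rw [hεdef]; exact div_le_div_of_nonneg_right (min_le_left _ _) (by norm_num)
        _ ≤ x.1 / 2 := div_le_div_of_nonneg_right (hδ x hx) (by norm_num)
    · have := hb' (some ⟨x, hx⟩)
      simpa [hΦ0] using this
    · exact hb ⟨x, hx⟩
  obtain ⟨f, hPf, hrf⟩ := exists_seq_of_forall_finset_exists P r hstep
  set en : ℕ → ℝ := fun n => (f n).1 with hen
  set bb : ℕ → B := fun n => (f n).2.1 with hbb
  set bb' : ℕ → (B →L[ℝ] ℝ) := fun n => (f n).2.2 with hbb'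
  have hedecay : ∀ n, en n ≤ en 0 * (1 / 2) ^ n := by
    intro n
    induction n with
    | zero => simp
    | succ n ih =>
      have h1 : en (n + 1) ≤ en n / 2 := (hrf n (n + 1) (Nat.lt_succ_self n)).1
      have h2 : en n / 2 ≤ en 0 * (1 / 2) ^ n / 2 := by linarith
      calc en (n + 1) ≤ en 0 * (1 / 2) ^ n / 2 := h1.trans h2
        _ = en 0 * (1 / 2) ^ (n + 1) := by ring
  have hetend : Filter.Tendsto en atTop (nhds 0) := by
    have h0 : Filter.Tendsto (fun n => en 0 * (1 / 2) ^ n) atTop (nhds 0) := by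
      have := (tendsto_pow_atTop_nhds_zero_of_lt_one (by norm_num : (0:ℝ) ≤ 1/2)
        (by norm_num : (1:ℝ)/2 < 1)).const_mul (en 0)
      simpa using this
    exact squeeze_zero (fun n => (hPf n).1.le) hedecay h0
  have key := hiter (ι := ℕ) (κ := ℕ) atTop atTop inferInstance inferInstance bb bb'
    ⟨‖F‖, fun n => (hPf n).2.1⟩ ⟨D, fun n => (hPf n).2.2.1⟩
    (fun _ => 0) (fun j => F (bb' j)) 0 θ
    (fun i => by
      refine squeeze_zero_norm' ?_ hetend
      filter_upwards [eventually_gt_atTop i] with j hj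
      exact ((hrf i j hj).2.1).le)
    tendsto_const_nhds
    (fun j => by
      have h1 : Filter.Tendsto (fun i => bb' j (bb i) - F (bb' j)) atTop (nhds 0) := by
        refine squeeze_zero_norm' ?_ hetend
        filter_upwards [eventually_gt_atTop j] with i hi
        exact ((hrf j i hi).2.2).le
      have := h1.add_const (F (bb' j))
      simpa using this)
    (by
      have h1 : Filter.Tendsto (fun j => F (bb' j) - θ) atTop (nhds 0) := by
        refine squeeze_zero_norm' ?_ hetend
        exact Filter.Eventually.of_forall fun j => ((hPf j).2.2.2).le
      have := h1.add_const θ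
      simpa using this)
  exact absurd key.symm (ne_of_gt hΦF)

/-- if iterated limits over bounded nets in `B` and `B*` always agree
(whenever both exist), then `A` has both the Lw*w- and Rw*w-property with respect
to `B`. -/
theorem LRwsw_of_iterated_limits {A B : Type*}
    [NonUnitalNormedRing A] [NormedSpace ℝ A] [IsScalarTower ℝ A A] [SMulCommClass ℝ A A]
    [CompleteSpace A] [NormedAddCommGroup B] [NormedSpace ℝ B] [CompleteSpace B]
    (πl : A →L[ℝ] B →L[ℝ] B) (πr : B →L[ℝ] A →L[ℝ] B)
    (hl : ∀ (a₁ a₂ : A) (b : B), πl (a₁ * a₂) b = πl a₁ (πl a₂ b))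
    (hr : ∀ (b : B) (a₁ a₂ : A), πr b (a₁ * a₂) = πr (πr b a₁) a₂)
    (hc : ∀ (a₁ : A) (b : B) (a₂ : A), πr (πl a₁ b) a₂ = πl a₁ (πr b a₂))
    (hiter : ∀ {ι κ : Type} (lι : Filter ι) (lκ : Filter κ), lι.NeBot → lκ.NeBot →
      ∀ (b : ι → B) (b' : κ → (B →L[ℝ] ℝ)),
        (∃ C : ℝ, ∀ i, ‖b i‖ ≤ C) → (∃ C : ℝ, ∀ j, ‖b' j‖ ≤ C) →
        ∀ (g : ι → ℝ) (h : κ → ℝ) (L₁ L₂ : ℝ),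
          (∀ i, Filter.Tendsto (fun j => b' j (b i)) lκ (nhds (g i))) →
          Filter.Tendsto g lι (nhds L₁) →
          (∀ j, Filter.Tendsto (fun i => b' j (b i)) lι (nhds (h j))) →
          Filter.Tendsto h lκ (nhds L₂) → L₁ = L₂) :
    (∀ (a : A) {ι : Type} (l : Filter ι), l.NeBot → ∀ b' : ι → (B →L[ℝ] ℝ),
      (∀ b : B, Filter.Tendsto
        (fun i => ((b' i).comp (πr.flip a)) b) l (nhds (0 : ℝ))) →
      ∀ F : (B →L[ℝ] ℝ) →L[ℝ] ℝ, Filter.Tendsto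
        (fun i => F ((b' i).comp (πr.flip a))) l (nhds (0 : ℝ))) ∧
    (∀ (a : A) {ι : Type} (l : Filter ι), l.NeBot → ∀ b' : ι → (B →L[ℝ] ℝ),
      (∀ b : B, Filter.Tendsto
        (fun i => ((b' i).comp (πl a)) b) l (nhds (0 : ℝ))) →
      ∀ F : (B →L[ℝ] ℝ) →L[ℝ] ℝ, Filter.Tendsto
        (fun i => F ((b' i).comp (πl a))) l (nhds (0 : ℝ))) := by
  have hsurj := surj_of_iterated_limits (B := B) @hiter
  constructor
  · intro a ι l hl b' hb' F
    obtain ⟨x, hx⟩ := hsurj F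
    simpa only [hx] using hb' x
  · intro a ι l hl b' hb' F
    obtain ⟨x, hx⟩ := hsurj F
    simpa only [hx] using hb' x
end
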